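/- Assume the Continuum Hypothesis (2^ℵ₀ = ℵ₁). If X is a Corson compact space that has a topological basis of cardinality at most ℵ₁, then the cardinality of X is at most ℵ₁. -/

import Mathlib

open Cardinal

/-- A topological space is Corson compact if it is compact Hausdorff and embeds into some
Tychonoff cube `[0,1]^ι` in such a way that every point has countable support. -/
def IsCorsonCompact (X : Type u) [TopologicalSpace X] : Prop :=
  CompactSpace X ∧ T2Space X ∧
    ∃ (ι : Type u) (e : X → (ι → Set.Icc (0:ℝ) 1)), Topology.IsEmbedding e ∧
      ∀ x : X, {ξ : ι | (e x ξ : ℝ) ≠ 0}.Countable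

/-- Assuming the Continuum Hypothesis, a Corson compact space with a topological basis of
cardinality at most `ℵ₁` has cardinality at most `ℵ₁`. -/
theorem stmt_7 (hCH : (2 : Cardinal.{u}) ^ ℵ₀ = aleph 1)
    (X : Type u) [TopologicalSpace X] (hX : IsCorsonCompact X)
    (hw : ∃ B : Set (Set X), TopologicalSpace.IsTopologicalBasis B ∧ #B ≤ aleph 1) :
    #X ≤ aleph 1 := by
  obtain ⟨_, _, ι, e, he, hcnt⟩ := hX
  obtain ⟨B, hB, hBcard⟩ := hw
  rcases isEmpty_or_nonempty X with hE | hNE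
  · rw [Cardinal.mk_eq_zero X]; exact zero_le
  have hcont : ∀ ξ : ι, Continuous fun x : X => (e x ξ : ℝ) := fun ξ =>
    continuous_subtype_val.comp ((continuous_apply ξ).comp he.continuous)
  have hp : ∀ U : Set X, ∃ x : X, U.Nonempty → x ∈ U := by
    intro U
    rcases U.eq_empty_or_nonempty with h | ⟨x, hx⟩
    · exact ⟨Classical.arbitrary X, fun h' => absurd h' (by simp [h])⟩
    · exact ⟨x, fun _ => hx⟩
  choose p hpmem using hp
  set T : Set ι := {ξ | ∃ x : X, (e x ξ : ℝ) ≠ 0} with hT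
  -- For every relevant coordinate, find a basis element whose chosen point has it in support
  have hφ' : ∀ ξ : T, ∃ U, U ∈ B ∧ (e (p U) ξ.val : ℝ) ≠ 0 := by
    rintro ⟨ξ, x, hx⟩
    have hopen : IsOpen ((fun y : X => (e y ξ : ℝ)) ⁻¹' ({0}ᶜ)) :=
      (isOpen_compl_singleton).preimage (hcont ξ)
    obtain ⟨U, hUB, hxU, hUsub⟩ := hB.exists_subset_of_mem_open (by exact hx) hopen
    exact ⟨U, hUB, hUsub (hpmem U ⟨x, hxU⟩)⟩
  choose φ hφB hφne using hφ'
  have hinj : ∀ U : Set X, ∃ f : ι → ℕ, Set.InjOn f {ξ | (e (p U) ξ : ℝ) ≠ 0} := by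
    intro U
    have := (hcnt (p U)).to_subtype
    obtain ⟨g, hg⟩ := exists_injective_nat {ξ : ι | (e (p U) ξ : ℝ) ≠ 0}
    refine ⟨fun ξ => if h : (e (p U) ξ : ℝ) ≠ 0 then g ⟨ξ, h⟩ else 0, ?_⟩
    intro a ha b hb hab
    simp only [Set.mem_setOf_eq] at ha hb
    dsimp only at hab
    rw [dif_pos ha, dif_pos hb] at hab
    exact congrArg Subtype.val (hg hab)
  choose f hf using hinj
  have hTinj : Function.Injective (fun ξ : T => ((⟨φ ξ, hφB ξ⟩ : B), f (φ ξ) ξ.val)) := by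
    intro ξ ξ' hmeq
    have h1 : φ ξ = φ ξ' := congrArg (fun q : B × ℕ => (q.1 : Set X)) hmeq
    have h2 : f (φ ξ) ξ.val = f (φ ξ') ξ'.val := congrArg Prod.snd hmeq
    rw [h1] at h2
    exact Subtype.ext (hf (φ ξ') (h1 ▸ hφne ξ) (hφne ξ') h2)
  have hTcard : #T ≤ aleph 1 := by
    calc #T ≤ #(B × ℕ) := Cardinal.mk_le_of_injective hTinj
      _ = #B * ℵ₀ := by
          rw [Cardinal.mk_prod]; simp
      _ ≤ aleph 1 * aleph 1 := mul_le_mul' hBcard (aleph0_le_aleph 1)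
      _ = aleph 1 := Cardinal.mul_eq_self (aleph0_le_aleph 1)
  rcases T.eq_empty_or_nonempty with hTe | ⟨t0, ht0⟩
  · -- degenerate case: all coordinates vanish, so X is a subsingleton
    have hsub : Subsingleton X := by
      refine ⟨fun x y => he.injective (funext fun ξ => Subtype.ext ?_)⟩
      have hx : (e x ξ : ℝ) = 0 := by
        by_contra h
        exact absurd (show ξ ∈ T from ⟨x, h⟩) (by simp [hTe])
      have hy : (e y ξ : ℝ) = 0 := by
        by_contra h
        exact absurd (show ξ ∈ T from ⟨y, h⟩) (by simp [hTe])
      rw [hx, hy]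
    calc #X ≤ 1 := Cardinal.le_one_iff_subsingleton.mpr hsub
      _ ≤ aleph 1 := le_trans Cardinal.one_le_aleph0 (aleph0_le_aleph 1)
  -- main case
  have hS : ∀ x : X, ∃ g : ℕ → T,
      ({ξ : T | (e x ξ.val : ℝ) ≠ 0} ∪ {⟨t0, ht0⟩}) = Set.range g := by
    intro x
    apply Set.Countable.exists_eq_range
    · refine Set.Countable.union ?_ (Set.countable_singleton _)
      have : {ξ : T | (e x ξ.val : ℝ) ≠ 0} =
          (Subtype.val : T → ι) ⁻¹' {ξ : ι | (e x ξ : ℝ) ≠ 0} := rfl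
      rw [this]
      exact (hcnt x).preimage Subtype.val_injective
    · exact ⟨⟨t0, ht0⟩, Or.inr rfl⟩
  choose g hg using hS
  set F : X → (ℕ → T × Set.Icc (0:ℝ) 1) := fun x n => (g x n, e x (g x n).val) with hFdef
  have key : ∀ a b : X, F a = F b → ∀ ξ : ι, (e a ξ : ℝ) ≠ 0 → (e a ξ : ℝ) = (e b ξ : ℝ) := by
    intro a b hab ξ hne
    have hmem : (⟨ξ, ⟨a, hne⟩⟩ : T) ∈ {η : T | (e a η.val : ℝ) ≠ 0} ∪ {⟨t0, ht0⟩} :=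
      Or.inl hne
    rw [hg a] at hmem
    obtain ⟨n, hn⟩ := hmem
    have h1 : g a n = g b n := congrArg Prod.fst (congrFun hab n)
    have h2 : e a (g a n).val = e b (g b n).val := congrArg Prod.snd (congrFun hab n)
    rw [← h1] at h2
    have hval : ξ = (g a n).val := (congrArg Subtype.val hn).symm
    rw [hval]
    exact congrArg Subtype.val h2
  have hFinj : Function.Injective F := by
    intro x y hxy
    apply he.injective
    funext ξ
    apply Subtype.ext
    by_cases hx0 : (e x ξ : ℝ) ≠ 0
    · exact key x y hxy ξ hx0
    · by_cases hy0 : (e y ξ : ℝ) ≠ 0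
      · exact (key y x hxy.symm ξ hy0).symm
      · push_neg at hx0 hy0
        rw [hx0, hy0]
  have hIcc : lift.{u} #(Set.Icc (0:ℝ) 1) ≤ aleph 1 := by
    calc lift.{u} #(Set.Icc (0:ℝ) 1) ≤ lift.{u} 𝔠 := by
          apply Cardinal.lift_le.mpr
          rw [← Cardinal.mk_real]
          exact Cardinal.mk_set_le _
      _ = 𝔠 := Cardinal.lift_continuum
      _ = 2 ^ ℵ₀ := Cardinal.two_power_aleph0.symm
      _ = aleph 1 := hCH
  calc #X ≤ #(ℕ → T × Set.Icc (0:ℝ) 1) := Cardinal.mk_le_of_injective hFinj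
    _ = (#(T × Set.Icc (0:ℝ) 1)) ^ (ℵ₀ : Cardinal.{u}) := by
        rw [Cardinal.mk_arrow]; simp
    _ = (#T * lift.{u} #(Set.Icc (0:ℝ) 1)) ^ (ℵ₀ : Cardinal.{u}) := by
        rw [Cardinal.mk_prod]; simp
    _ ≤ (aleph 1 * aleph 1) ^ (ℵ₀ : Cardinal.{u}) :=
        Cardinal.power_le_power_right (mul_le_mul' hTcard hIcc)
    _ = (aleph 1) ^ (ℵ₀ : Cardinal.{u}) := by
        rw [Cardinal.mul_eq_self (aleph0_le_aleph 1)]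
    _ = aleph 1 := by
        rw [← hCH, ← Cardinal.power_mul, Cardinal.aleph0_mul_aleph0]
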